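/- Let X be a random vector in ℝⁿ and μ a discrete random variable on the same probability space, taking countably many values with positive probability. If for each value t with P(μ = t) > 0 the conditional distribution of X given {μ = t} is a sum of q standard Gaussian random vectors in ℝⁿ, then X itself is a sum of q standard Gaussian random vectors in ℝⁿ. -/

import Mathlib

open MeasureTheory ProbabilityTheory

/-- The standard Gaussian measure on `ℝⁿ`. -/
noncomputable def stdGaussian (n : ℕ) : Measure (Fin n → ℝ) :=
  Measure.pi fun _ => gaussianReal 0 1

/-- A probability distribution `ν` on `ℝⁿ` is a sum of `q` standard Gaussian random vectors if
there exist `q` (not necessarily independent) standard Gaussian random vectors on a common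
probability space whose sum has distribution `ν`. -/
def IsSumOfGaussians (n q : ℕ) (ν : Measure (Fin n → ℝ)) : Prop :=
  ∃ (Ω : Type) (_ : MeasurableSpace Ω) (μ : Measure Ω) (_ : IsProbabilityMeasure μ)
    (G : Fin q → Ω → Fin n → ℝ), (∀ i, Measurable (G i)) ∧
    (∀ i, μ.map (G i) = stdGaussian n) ∧
    μ.map (fun ω => ∑ i, G i ω) = ν

lemma measurable_sigmaMk' {α : Type*} {β : α → Type*} [m : ∀ a, MeasurableSpace (β a)] (a : α) :
    Measurable (@Sigma.mk α β a) := by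
  intro s hs
  have : MeasurableSet[⨅ a, (m a).map (Sigma.mk a)] s := hs
  exact (MeasurableSpace.measurableSet_iInf.1 this) a

lemma measurable_sigma_fun {α : Type*} {β : α → Type*} [m : ∀ a, MeasurableSpace (β a)]
    {γ : Type*} [MeasurableSpace γ] {f : Sigma β → γ}
    (hf : ∀ a, Measurable fun b => f ⟨a, b⟩) : Measurable f := by
  intro s hs
  show MeasurableSet[⨅ a, (m a).map (Sigma.mk a)] (f ⁻¹' s)
  exact MeasurableSpace.measurableSet_iInf.2 fun a => hf a hs

lemma stdGaussian_isProbabilityMeasure (n : ℕ) : IsProbabilityMeasure (stdGaussian n) := by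
  rw [_root_.stdGaussian]; infer_instance

/-- Local-to-global: if `X` conditioned on each atom `{M = t}` of a discrete random variable `M`
is a sum of `q` standard Gaussian random vectors, then so is `X`. -/
theorem isSumOfGaussians_of_cond (n q : ℕ) (Ω : Type) [MeasurableSpace Ω]
    (μ : Measure Ω) [IsProbabilityMeasure μ]
    (T : Type) [MeasurableSpace T] [MeasurableSingletonClass T] [Countable T]
    (X : Ω → Fin n → ℝ) (hX : Measurable X) (M : Ω → T) (hM : Measurable M)
    (h : ∀ t : T, μ {ω | M ω = t} ≠ 0 →
      IsSumOfGaussians n q ((μ[|{ω | M ω = t}]).map X)) :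
    IsSumOfGaussians n q (μ.map X) := by
  classical
  set fib : T → Set Ω := fun t => {ω | M ω = t} with hfibdef
  have hfib : ∀ t : T, MeasurableSet (fib t) := fun t => hM (measurableSet_singleton t)
  have hdisj : Pairwise (Function.onFun Disjoint fib) := by
    intro t t' htt'
    rw [Function.onFun, Set.disjoint_left]
    rintro ω (h1 : M ω = t) (h2 : M ω = t')
    exact htt' (h1 ▸ h2 ▸ rfl)
  have hUnion : (⋃ t, fib t) = Set.univ := by
    ext ω; simp [hfibdef]
  have htot : (∑' t, μ (fib t)) = 1 := by
    rw [← measure_iUnion hdisj hfib, hUnion, measure_univ]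
  -- choose data for each fiber
  have key : ∀ t : T, ∃ (Ω' : Type) (mΩ' : MeasurableSpace Ω') (κ : Measure Ω')
      (_ : IsProbabilityMeasure κ) (G : Fin q → Ω' → Fin n → ℝ),
      (∀ i, Measurable (G i)) ∧ (∀ i, κ.map (G i) = stdGaussian n) ∧
      (μ (fib t) ≠ 0 → κ.map (fun ω => ∑ i, G i ω) = (μ[|fib t]).map X) := by
    intro t
    by_cases ht : μ (fib t) ≠ 0
    · obtain ⟨Ω', mΩ', κ, hκ, G, hmeas, hmap, hsum⟩ := h t ht
      exact ⟨Ω', mΩ', κ, hκ, G, hmeas, hmap, fun _ => hsum⟩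
    · exact ⟨Fin n → ℝ, inferInstance, stdGaussian n, stdGaussian_isProbabilityMeasure n,
        fun _ => id, fun _ => measurable_id, fun _ => Measure.map_id,
        fun h' => absurd h' ht⟩
  choose Ωf mf κf hκf Gf hGmeas hGmap hGsum using key
  letI : ∀ t, MeasurableSpace (Ωf t) := mf
  haveI : ∀ t, IsProbabilityMeasure (κf t) := hκf
  -- the glued space
  refine ⟨Σ t, Ωf t, inferInstance,
    Measure.sum (fun t => μ (fib t) • (κf t).map (Sigma.mk t)), ?_,
    fun i x => Gf x.1 i x.2, ?_, ?_, ?_⟩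
  · constructor
    rw [Measure.sum_apply _ MeasurableSet.univ]
    have : ∀ t, (μ (fib t) • (κf t).map (Sigma.mk t)) Set.univ = μ (fib t) := by
      intro t
      rw [Measure.smul_apply, Measure.map_apply (measurable_sigmaMk' t) MeasurableSet.univ]
      simp
    simp_rw [this, htot]
  · intro i
    exact measurable_sigma_fun fun t => hGmeas t i
  · intro i
    rw [Measure.map_sum ((measurable_sigma_fun fun t => hGmeas t i).aemeasurable)]
    have : ∀ t, ((μ (fib t) • (κf t).map (Sigma.mk t)).map fun x => Gf x.1 i x.2)
        = μ (fib t) • stdGaussian n := by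
      intro t
      rw [Measure.map_smul, Measure.map_map (measurable_sigma_fun fun t => hGmeas t i)
        (measurable_sigmaMk' t)]
      have : ((fun x : Σ t, Ωf t => Gf x.1 i x.2) ∘ Sigma.mk t) = Gf t i := rfl
      rw [this, hGmap t i]
    simp_rw [this]
    ext s hs
    rw [Measure.sum_apply _ hs]
    simp_rw [Measure.smul_apply, smul_eq_mul]
    rw [ENNReal.tsum_mul_right, htot, one_mul]
  · have hsum_meas : Measurable fun x : Σ t, Ωf t => ∑ i, Gf x.1 i x.2 :=
      Finset.measurable_sum _ fun i _ => measurable_sigma_fun fun t => hGmeas t i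
    rw [Measure.map_sum hsum_meas.aemeasurable]
    have hterm : ∀ t, ((μ (fib t) • (κf t).map (Sigma.mk t)).map
        fun x : Σ t, Ωf t => ∑ i, Gf x.1 i x.2) = (μ.restrict (fib t)).map X := by
      intro t
      rw [Measure.map_smul, Measure.map_map hsum_meas (measurable_sigmaMk' t)]
      have hcomp : ((fun x : Σ t, Ωf t => ∑ i, Gf x.1 i x.2) ∘ Sigma.mk t)
          = fun ω => ∑ i, Gf t i ω := rfl
      rw [hcomp]
      by_cases ht : μ (fib t) = 0
      · rw [ht, zero_smul, Measure.restrict_eq_zero.2 ht, Measure.map_zero]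
      · rw [hGsum t ht, ← Measure.map_smul]
        congr 1
        rw [ProbabilityTheory.cond, smul_smul, ENNReal.mul_inv_cancel ht (measure_ne_top μ _),
          one_smul]
    simp_rw [hterm]
    rw [← Measure.map_sum hX.aemeasurable, ← Measure.restrict_iUnion hdisj hfib, hUnion,
      Measure.restrict_univ]
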